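/- Let $p : X \to Y$ be a quandle covering and $y, y' \in Y$ elements in the same connected component of $Y$ (i.e., $y' = \phi(y)$ for some $\phi$ in the inner automorphism group of $Y$). Then there is a bijection between the fibres $p^{-1}(y)$ and $p^{-1}(y')$, given by an inner automorphism of $X$. -/

import Mathlib

/-- A quandle with the paper's (right-multiplication) convention:
`x * y = S_y(x)`, each `S_y` is an automorphism of the quandle fixing `y`. -/
class Quandle' (Q : Type*) extends Mul Q where
  invMul : Q → Q → Q
  rightDist : ∀ x y z : Q, (x * y) * z = (x * z) * (y * z)
  invMul_mul : ∀ x y : Q, invMul (x * y) y = x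
  mul_invMul : ∀ x y : Q, (invMul x y) * y = x
  mul_self : ∀ x : Q, x * x = x

/-- Right multiplication by `a` as a permutation of the quandle. -/
def rightMulPerm {Q : Type*} [Quandle' Q] (a : Q) : Equiv.Perm Q where
  toFun z := z * a
  invFun z := Quandle'.invMul z a
  left_inv z := Quandle'.invMul_mul z a
  right_inv z := Quandle'.mul_invMul z a

/-- If `y` and `y'` lie in the same connected component of the base of a quandle covering,
then some inner automorphism of the total quandle maps the fibre over `y` bijectively onto
the fibre over `y'`. -/
theorem stmt13 {Q R : Type*} [Quandle' Q] [Quandle' R] (p : Q → R)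
    (hom : ∀ a b : Q, p (a * b) = p a * p b) (surj : Function.Surjective p)
    (cov : ∀ x x' : Q, p x = p x' → ∀ z : Q, z * x = z * x')
    (y y' : R)
    (hcomp : ∃ φ ∈ Subgroup.closure (Set.range (rightMulPerm (Q := R))), φ y = y') :
    ∃ ψ ∈ Subgroup.closure (Set.range (rightMulPerm (Q := Q))),
      Set.BijOn ψ (p ⁻¹' {y}) (p ⁻¹' {y'}) := by
  obtain ⟨φ, hφ, hφy⟩ := hcomp
  -- every element of the closure on R is semi-conjugate to one on Q
  have key : ∀ φ ∈ Subgroup.closure (Set.range (rightMulPerm (Q := R))),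
      ∃ ψ ∈ Subgroup.closure (Set.range (rightMulPerm (Q := Q))),
        ∀ z : Q, p (ψ z) = φ (p z) := by
    intro φ hφ
    induction hφ using Subgroup.closure_induction with
    | mem g hg =>
      obtain ⟨b, rfl⟩ := hg
      obtain ⟨a, rfl⟩ := surj b
      exact ⟨rightMulPerm a, Subgroup.subset_closure ⟨a, rfl⟩, fun z => hom z a⟩
    | one => exact ⟨1, one_mem _, fun z => rfl⟩
    | mul g h _ _ ihg ihh =>
      obtain ⟨ψg, hψg, hg⟩ := ihg
      obtain ⟨ψh, hψh, hh⟩ := ihh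
      exact ⟨ψg * ψh, mul_mem hψg hψh, fun z => by
        simp only [Equiv.Perm.mul_apply]; rw [hg, hh]⟩
    | inv g _ ihg =>
      obtain ⟨ψg, hψg, hg⟩ := ihg
      refine ⟨ψg⁻¹, inv_mem hψg, fun z => ?_⟩
      have := hg (ψg⁻¹ z)
      simp only [Equiv.Perm.inv_def, Equiv.apply_symm_apply] at this
      rw [this, Equiv.Perm.inv_def, Equiv.Perm.inv_def, Equiv.symm_apply_apply]
  obtain ⟨ψ, hψ, hsc⟩ := key φ hφ
  refine ⟨ψ, hψ, ?_, ψ.injective.injOn, ?_⟩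
  · intro z hz
    simp only [Set.mem_preimage, Set.mem_singleton_iff] at hz ⊢
    rw [hsc, hz, hφy]
  · intro w hw
    simp only [Set.mem_preimage, Set.mem_singleton_iff] at hw
    refine ⟨ψ⁻¹ w, ?_, ψ.apply_symm_apply w⟩
    have := hsc (ψ⁻¹ w)
    rw [Equiv.Perm.inv_def, ψ.apply_symm_apply, hw, ← hφy] at this
    simp only [Set.mem_preimage, Set.mem_singleton_iff]
    exact φ.injective this.symm
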